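/- Let L be a 3-dimensional antisymmetric ℤ_p-algebra. The following are equivalent: (1) the submodule [L,L] has rank 3; (2) every term δ_i(L) of the derived series has rank 3; (3) L is unsolvable (δ_i(L) ≠ 0 for all i); (4) the matrix of L with respect to some basis has nonzero determinant; (5) the matrix of L with respect to every basis has nonzero determinant. -/

import Mathlib

/-- The submodule generated by all brackets `f a b` with `a ∈ S`, `b ∈ T`. -/
noncomputable def bracketSub {p : ℕ} [Fact p.Prime] {L : Type*} [AddCommGroup L] [Module ℤ_[p] L]
    (f : L →ₗ[ℤ_[p]] L →ₗ[ℤ_[p]] L) (S T : Submodule ℤ_[p] L) : Submodule ℤ_[p] L :=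
  Submodule.span ℤ_[p] {z | ∃ a ∈ S, ∃ b ∈ T, z = f a b}

/-- The derived series `δ_0(L) = L`, `δ_{i+1}(L) = [δ_i(L), δ_i(L)]`. -/
noncomputable def derivedSer {p : ℕ} [Fact p.Prime] {L : Type*} [AddCommGroup L] [Module ℤ_[p] L]
    (f : L →ₗ[ℤ_[p]] L →ₗ[ℤ_[p]] L) : ℕ → Submodule ℤ_[p] L
  | 0 => ⊤
  | n + 1 => bracketSub f (derivedSer f n) (derivedSer f n)

/-- `A` is the matrix of the bracket `f` with respect to the basis `b`. -/
def MatrixOf {p : ℕ} [Fact p.Prime] {L : Type*} [AddCommGroup L] [Module ℤ_[p] L]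
    (f : L →ₗ[ℤ_[p]] L →ₗ[ℤ_[p]] L) (b : Module.Basis (Fin 3) ℤ_[p] L)
    (A : Matrix (Fin 3) (Fin 3) ℤ_[p]) : Prop :=
  f (b 1) (b 2) = ∑ i : Fin 3, A i 0 • b i ∧
  f (b 2) (b 0) = ∑ i : Fin 3, A i 1 • b i ∧
  f (b 0) (b 1) = ∑ i : Fin 3, A i 2 • b i

section Aux

variable {p : ℕ} [Fact p.Prime] {L : Type*} [AddCommGroup L] [Module ℤ_[p] L]
  (f : L →ₗ[ℤ_[p]] L →ₗ[ℤ_[p]] L)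

theorem aux_skew (hanti : ∀ z : L, f z z = 0) (x y : L) :
    f y x = - f x y := by
  have h := hanti (x + y)
  simp only [map_add, LinearMap.add_apply, hanti, zero_add, add_zero] at h
  exact (eq_neg_of_add_eq_zero_left h)

theorem aux_indep_smul {v : Fin 3 → L} (hv : LinearIndependent ℤ_[p] v)
    (a : Fin 3 → ℤ_[p]) (ha : ∀ i, a i ≠ 0) :
    LinearIndependent ℤ_[p] (fun i => a i • v i) := by
  rw [Fintype.linearIndependent_iff] at hv ⊢
  intro g hg i
  have := hv (fun i => g i * a i) (by simpa [mul_smul] using hg) i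
  exact (mul_eq_zero.mp this).resolve_right (ha i)

theorem aux_rank_le (b0 : Module.Basis (Fin 3) ℤ_[p] L) (M : Submodule ℤ_[p] L) :
    Module.rank ℤ_[p] M ≤ 3 := by
  have := Submodule.rank_le M
  rw [rank_eq_card_basis b0] at this
  simpa using this

theorem aux_finrank_of_triple (b0 : Module.Basis (Fin 3) ℤ_[p] L) (M : Submodule ℤ_[p] L)
    (v : Fin 3 → L) (hmem : ∀ i, v i ∈ M) (hv : LinearIndependent ℤ_[p] v) :
    Module.finrank ℤ_[p] M = 3 := by
  have hle := aux_rank_le b0 M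
  have hge : (3 : Cardinal) ≤ Module.rank ℤ_[p] M := by
    have hv' : LinearIndependent ℤ_[p] (fun i => (⟨v i, hmem i⟩ : M)) := by
      apply LinearIndependent.of_comp M.subtype
      exact hv
    simpa using hv'.cardinal_lift_le_rank
  exact Module.finrank_eq_of_rank_eq (le_antisymm hle hge)

theorem aux_triple_of_finrank (b0 : Module.Basis (Fin 3) ℤ_[p] L) (M : Submodule ℤ_[p] L)
    (h : Module.finrank ℤ_[p] M = 3) :
    ∃ v : Fin 3 → L, (∀ i, v i ∈ M) ∧ LinearIndependent ℤ_[p] v := by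
  have hrank : Module.rank ℤ_[p] M = 3 :=
    (Module.rank_eq_ofNat_iff_finrank_eq_ofNat 3).mpr h
  obtain ⟨s, hs, hsi⟩ := exists_set_linearIndependent ℤ_[p] M
  rw [hrank] at hs
  have : Nonempty (Fin 3 ≃ s) := by
    refine Cardinal.lift_mk_eq'.mp ?_
    rw [hs]
    simp
  obtain ⟨e⟩ := this
  refine ⟨fun i => ((e i : M) : L), fun i => ((e i : M)).2, ?_⟩
  have h1 : LinearIndependent ℤ_[p] (fun i : Fin 3 => (e i : M)) :=
    hsi.comp e e.injective
  have := h1.map' M.subtype (Submodule.ker_subtype M)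
  exact this

theorem aux_no_triple (x y : L) (v : Fin 3 → L)
    (hv : LinearIndependent ℤ_[p] v)
    (hmem : ∀ i, v i ∈ Submodule.span ℤ_[p] ({x, y} : Set L)) : False := by
  set N := Submodule.span ℤ_[p] ({x, y} : Set L)
  have hge : (3 : Cardinal) ≤ Module.rank ℤ_[p] N := by
    have hv' : LinearIndependent ℤ_[p] (fun i => (⟨v i, hmem i⟩ : N)) := by
      apply LinearIndependent.of_comp N.subtype
      exact hv
    simpa using hv'.cardinal_lift_le_rank
  have hle : Module.rank ℤ_[p] N ≤ 2 := by
    refine le_trans (rank_span_le _) ?_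
    refine le_trans (Cardinal.mk_insert_le) ?_
    simp [Cardinal.mk_singleton]
    norm_num
  have : (3 : Cardinal) ≤ 2 := le_trans hge hle
  norm_num at this

theorem aux_sat (b0 : Module.Basis (Fin 3) ℤ_[p] L) (M : Submodule ℤ_[p] L)
    (v : Fin 3 → L) (hmem : ∀ i, v i ∈ M) (hv : LinearIndependent ℤ_[p] v) (x : L) :
    ∃ c : ℤ_[p], c ≠ 0 ∧ c • x ∈ M := by
  have hdep : ¬ LinearIndependent ℤ_[p] (Fin.cons x v : Fin 4 → L) := by
    intro h
    have h4 := h.cardinal_lift_le_rank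
    rw [rank_eq_card_basis b0] at h4
    simp at h4
    norm_num at h4
  rw [Fintype.linearIndependent_iff] at hdep
  push_neg at hdep
  obtain ⟨g, hg, i, hi⟩ := hdep
  rw [Fin.sum_univ_succ] at hg
  simp only [Fin.cons_zero, Fin.cons_succ] at hg
  by_cases h0 : g 0 = 0
  · exfalso
    rw [h0, zero_smul, zero_add] at hg
    have := Fintype.linearIndependent_iff.mp hv (fun j => g j.succ) hg
    refine hi ?_
    rcases Fin.eq_zero_or_eq_succ i with rfl | ⟨j, rfl⟩
    · exact h0
    · exact this j
  · refine ⟨g 0, h0, ?_⟩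
    have : g 0 • x = -∑ j : Fin 3, g j.succ • v j := by
      rw [eq_neg_of_add_eq_zero_left hg]
    rw [this]
    exact Submodule.neg_mem _ (Submodule.sum_mem _ fun j _ => Submodule.smul_mem _ _ (hmem j))

theorem aux_matrix_exists (b : Module.Basis (Fin 3) ℤ_[p] L) : ∃ A, MatrixOf f b A := by
  refine ⟨Matrix.of fun i j =>
    b.repr (![f (b 1) (b 2), f (b 2) (b 0), f (b 0) (b 1)] j) i, ?_, ?_, ?_⟩ <;>
    · simp only [Matrix.of_apply, Matrix.cons_val_zero, Matrix.cons_val_one, Matrix.head_cons,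
        Matrix.cons_val_two, Matrix.tail_cons]
      exact (b.sum_repr _).symm

theorem aux_expand (b : Module.Basis (Fin 3) ℤ_[p] L) (a x : L) :
    f a x = ∑ i : Fin 3, ∑ j : Fin 3, (b.repr a i * b.repr x j) • f (b i) (b j) := by
  conv_lhs => rw [← b.sum_repr a, ← b.sum_repr x]
  simp only [map_sum, LinearMap.sum_apply, map_smul, LinearMap.smul_apply, Finset.smul_sum,
    smul_smul]
  rw [Finset.sum_comm]
  exact Finset.sum_congr rfl fun i _ => Finset.sum_congr rfl fun j _ => by rw [mul_comm]

/-- `derivedSer f 1` is spanned by the three basic brackets. -/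
theorem aux_der1 (hanti : ∀ z : L, f z z = 0) (b : Module.Basis (Fin 3) ℤ_[p] L) :
    derivedSer f 1 = Submodule.span ℤ_[p]
      ({f (b 1) (b 2), f (b 2) (b 0), f (b 0) (b 1)} : Set L) := by
  apply le_antisymm
  · show bracketSub f ⊤ ⊤ ≤ _
    rw [bracketSub, Submodule.span_le]
    rintro z ⟨a, -, x, -, rfl⟩
    set W := Submodule.span ℤ_[p]
        ({f (b 1) (b 2), f (b 2) (b 0), f (b 0) (b 1)} : Set L) with hW
    have h12 : f (b 1) (b 2) ∈ W := Submodule.subset_span (by simp)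
    have h20 : f (b 2) (b 0) ∈ W := Submodule.subset_span (by simp)
    have h01 : f (b 0) (b 1) ∈ W := Submodule.subset_span (by simp)
    have hmem : ∀ u v : L, f u v ∈ W → f v u ∈ W := fun u v h => by
      rw [aux_skew f hanti]; exact W.neg_mem h
    have key : ∀ i j : Fin 3, f (b i) (b j) ∈ W := by
      intro i j
      fin_cases i <;> fin_cases j <;>
        first
          | (rw [hanti]; exact W.zero_mem)
          | exact h12 | exact h20 | exact h01
          | exact hmem _ _ h12 | exact hmem _ _ h20 | exact hmem _ _ h01
    rw [aux_expand f b a x]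
    exact Submodule.sum_mem _ fun i _ => Submodule.sum_mem _ fun j _ =>
      Submodule.smul_mem _ _ (key i j)
  · rw [Submodule.span_le]
    rintro z hz
    rcases hz with rfl | rfl | rfl
    · exact Submodule.subset_span ⟨b 1, trivial, b 2, trivial, rfl⟩
    · exact Submodule.subset_span ⟨b 2, trivial, b 0, trivial, rfl⟩
    · exact Submodule.subset_span ⟨b 0, trivial, b 1, trivial, rfl⟩

theorem aux_colrel {b : Module.Basis (Fin 3) ℤ_[p] L} {A : Matrix (Fin 3) (Fin 3) ℤ_[p]}
    (hA : MatrixOf f b A) (g : Fin 3 → ℤ_[p]) :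
    g 0 • f (b 1) (b 2) + g 1 • f (b 2) (b 0) + g 2 • f (b 0) (b 1) =
      ∑ i : Fin 3, (A.mulVec g) i • b i := by
  obtain ⟨h0, h1, h2⟩ := hA
  rw [h0, h1, h2]
  simp only [Matrix.mulVec, dotProduct, Fin.sum_univ_three, Finset.smul_sum,
    smul_smul, add_smul]
  module

/-- If the matrix has nonzero determinant, the columns are independent. -/
theorem aux_cols {b : Module.Basis (Fin 3) ℤ_[p] L} {A : Matrix (Fin 3) (Fin 3) ℤ_[p]}
    (hA : MatrixOf f b A) (hdet : A.det ≠ 0) :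
    LinearIndependent ℤ_[p] ![f (b 1) (b 2), f (b 2) (b 0), f (b 0) (b 1)] := by
  rw [Fintype.linearIndependent_iff]
  intro g hg
  rw [Fin.sum_univ_three] at hg
  simp only [Matrix.cons_val_zero, Matrix.cons_val_one, Matrix.head_cons,
    Matrix.cons_val_two, Matrix.tail_cons] at hg
  rw [aux_colrel f hA g] at hg
  have hm : A.mulVec g = 0 := by
    ext i
    exact Fintype.linearIndependent_iff.mp b.linearIndependent _ hg i
  intro i
  by_contra hgi
  exact hdet (Matrix.exists_mulVec_eq_zero_iff.mp
    ⟨g, fun h => hgi (by rw [h]; rfl), hm⟩)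

/-- If the matrix has zero determinant, the columns satisfy a nontrivial relation. -/
theorem aux_dep {b : Module.Basis (Fin 3) ℤ_[p] L} {A : Matrix (Fin 3) (Fin 3) ℤ_[p]}
    (hA : MatrixOf f b A) (hdet : A.det = 0) :
    ∃ g : Fin 3 → ℤ_[p], (∃ k, g k ≠ 0) ∧
      g 0 • f (b 1) (b 2) + g 1 • f (b 2) (b 0) + g 2 • f (b 0) (b 1) = 0 := by
  obtain ⟨g, hg, hm⟩ := Matrix.exists_mulVec_eq_zero_iff.mpr hdet
  refine ⟨g, ?_, ?_⟩
  · by_contra h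
    push_neg at h
    exact hg (funext fun k => h k)
  · rw [aux_colrel f hA g, hm]
    simp

theorem aux_key (hanti : ∀ z : L, f z z = 0) (x y z : L) (a b c : ℤ_[p])
    (rel : a • x + b • y + c • z = 0) :
    ∀ u ∈ Submodule.span ℤ_[p] ({x, y, z} : Set L),
    ∀ v ∈ Submodule.span ℤ_[p] ({x, y, z} : Set L),
      c • f u v ∈ Submodule.span ℤ_[p] ({f x y} : Set L) := by
  set W := Submodule.span ℤ_[p] ({f x y} : Set L) with hW
  have hz' : c • z = -(a • x + b • y) := eq_neg_of_add_eq_zero_right rel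
  have hxy : f x y ∈ W := Submodule.subset_span rfl
  have base : ∀ u ∈ ({x, y, z} : Set L), ∀ v ∈ ({x, y, z} : Set L), c • f u v ∈ W := by
    have hxz : c • f x z ∈ W := by
      have : c • f x z = -(b • f x y) := by
        rw [← map_smul, hz']
        simp [hanti]
      rw [this]; exact W.neg_mem (W.smul_mem _ hxy)
    have hyz : c • f y z ∈ W := by
      have : c • f y z = a • f x y := by
        rw [← map_smul, hz']
        simp [hanti, aux_skew f hanti x y]
      rw [this]; exact W.smul_mem _ hxy
    have hflip : ∀ u v : L, c • f u v ∈ W → c • f v u ∈ W := fun u v h => by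
      rw [aux_skew f hanti u v, smul_neg]
      exact W.neg_mem h
    rintro u (rfl | rfl | rfl) v (rfl | rfl | rfl)
    · rw [hanti]; simp
    · exact W.smul_mem _ hxy
    · exact hxz
    · exact hflip _ _ (W.smul_mem _ hxy)
    · rw [hanti]; simp
    · exact hyz
    · exact hflip _ _ hxz
    · exact hflip _ _ hyz
    · rw [hanti]; simp
  intro u hu v hv
  induction hu, hv using Submodule.span_induction₂ with
  | mem_mem u v hu hv => exact base u hu v hv
  | zero_left v hv => simp
  | zero_right u hu => simp
  | add_left u₁ u₂ v h₁ h₂ h₃ hp₁ hp₂ =>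
      have : c • f (u₁ + u₂) v = c • f u₁ v + c • f u₂ v := by
        simp [map_add, smul_add]
      rw [this]; exact W.add_mem hp₁ hp₂
  | add_right u v₁ v₂ h₁ h₂ h₃ hp₁ hp₂ =>
      have : c • f u (v₁ + v₂) = c • f u v₁ + c • f u v₂ := by
        simp [map_add, smul_add]
      rw [this]; exact W.add_mem hp₁ hp₂
  | smul_left r u v h₁ h₂ hp =>
      have : c • f (r • u) v = r • (c • f u v) := by
        simp [map_smul, smul_comm c r]
      rw [this]; exact W.smul_mem _ hp
  | smul_right r u v h₁ h₂ hp =>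
      have : c • f u (r • v) = r • (c • f u v) := by
        simp [map_smul, smul_comm c r]
      rw [this]; exact W.smul_mem _ hp

theorem aux_proj (x y z : L) (a b c : ℤ_[p]) (rel : a • x + b • y + c • z = 0) :
    ∀ u ∈ Submodule.span ℤ_[p] ({x, y, z} : Set L),
      c • u ∈ Submodule.span ℤ_[p] ({x, y} : Set L) := by
  set N := Submodule.span ℤ_[p] ({x, y} : Set L) with hN
  have hz' : c • z = -(a • x + b • y) := eq_neg_of_add_eq_zero_right rel
  have hx : x ∈ N := Submodule.subset_span (by simp)
  have hy : y ∈ N := Submodule.subset_span (by simp)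
  intro u hu
  induction hu using Submodule.span_induction with
  | mem u hu =>
      rcases hu with rfl | rfl | rfl
      · exact N.smul_mem _ hx
      · exact N.smul_mem _ hy
      · rw [hz']; exact N.neg_mem (N.add_mem (N.smul_mem _ hx) (N.smul_mem _ hy))
  | zero => simp
  | add u v hu hv hpu hpv => rw [smul_add]; exact N.add_mem hpu hpv
  | smul r u hu hpu => rw [smul_comm]; exact N.smul_mem _ hpu

/-- permutation of a dependence relation on the three columns -/
theorem aux_perm (c : Fin 3 → L) (g : Fin 3 → ℤ_[p]) (k : Fin 3) (hk : g k ≠ 0)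
    (hrel : g 0 • c 0 + g 1 • c 1 + g 2 • c 2 = 0) :
    ∃ (x y z : L) (a b cc : ℤ_[p]), cc ≠ 0 ∧ a • x + b • y + cc • z = 0 ∧
      Submodule.span ℤ_[p] ({x, y, z} : Set L) =
        Submodule.span ℤ_[p] ({c 0, c 1, c 2} : Set L) := by
  fin_cases k
  · refine ⟨c 1, c 2, c 0, g 1, g 2, g 0, hk, by rw [← hrel]; module, ?_⟩
    congr 1
    ext u
    simp only [Set.mem_insert_iff, Set.mem_singleton_iff]
    tauto
  · refine ⟨c 2, c 0, c 1, g 2, g 0, g 1, hk, by rw [← hrel]; module, ?_⟩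
    congr 1
    ext u
    simp only [Set.mem_insert_iff, Set.mem_singleton_iff]
    tauto
  · exact ⟨c 0, c 1, c 2, g 0, g 1, g 2, hk, hrel, rfl⟩

/-- Zero determinant for some basis forces solvability at stage 3. -/
theorem aux_solv (hanti : ∀ z : L, f z z = 0) (b : Module.Basis (Fin 3) ℤ_[p] L)
    (A : Matrix (Fin 3) (Fin 3) ℤ_[p]) (hA : MatrixOf f b A) (hdet : A.det = 0) :
    derivedSer f 3 = ⊥ := by
  have hfree : Module.Free ℤ_[p] L := Module.Free.of_basis b
  have hnz : Module.IsTorsionFree ℤ_[p] L := by infer_instance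
  obtain ⟨g, ⟨k, hk⟩, hrel⟩ := aux_dep f hA hdet
  obtain ⟨x, y, z, a, bb, cc, hcc, rel, hspan⟩ :=
    aux_perm (![f (b 1) (b 2), f (b 2) (b 0), f (b 0) (b 1)]) g k hk
      (by simpa using hrel)
  simp only [Matrix.cons_val_zero, Matrix.cons_val_one, Matrix.head_cons,
    Matrix.cons_val_two, Matrix.tail_cons] at hspan
  have hder1 : derivedSer f 1 = Submodule.span ℤ_[p] ({x, y, z} : Set L) := by
    rw [aux_der1 f hanti b]
    exact hspan.symm
  set W := Submodule.span ℤ_[p] ({f x y} : Set L) with hW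
  have H2 : ∀ u ∈ derivedSer f 2, cc • u ∈ W := by
    have hle : derivedSer f 2 ≤ Submodule.comap (LinearMap.lsmul ℤ_[p] L cc) W := by
      show bracketSub f (derivedSer f 1) (derivedSer f 1) ≤ _
      rw [bracketSub, Submodule.span_le]
      rintro _ ⟨u, hu, v, hv, rfl⟩
      rw [hder1] at hu hv
      simpa using aux_key f hanti x y z a bb cc rel u hu v hv
    intro u hu
    simpa using hle hu
  have h3 : derivedSer f 3 ≤ ⊥ := by
    show bracketSub f (derivedSer f 2) (derivedSer f 2) ≤ ⊥
    rw [bracketSub, Submodule.span_le]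
    rintro _ ⟨u, hu, v, hv, rfl⟩
    obtain ⟨r, hr⟩ := Submodule.mem_span_singleton.mp (H2 u hu)
    obtain ⟨s, hs⟩ := Submodule.mem_span_singleton.mp (H2 v hv)
    have hzero : (cc * cc) • f u v = 0 := by
      have h1 : (cc * cc) • f u v = f (cc • u) (cc • v) := by
        simp [map_smul, smul_smul, mul_comm]
      rw [h1, ← hr, ← hs]
      simp [map_smul, hanti]
    have := (smul_eq_zero.mp hzero).resolve_left (mul_ne_zero hcc hcc)
    simpa [Submodule.mem_bot] using this
  exact le_antisymm h3 bot_le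

/-- Nonzero determinant gives an independent triple in every term of the derived series. -/
theorem aux_ascent (hanti : ∀ z : L, f z z = 0) (b : Module.Basis (Fin 3) ℤ_[p] L)
    (A : Matrix (Fin 3) (Fin 3) ℤ_[p]) (hA : MatrixOf f b A) (hdet : A.det ≠ 0) :
    ∀ i, ∃ v : Fin 3 → L, (∀ j, v j ∈ derivedSer f i) ∧ LinearIndependent ℤ_[p] v := by
  set c : Fin 3 → L := ![f (b 1) (b 2), f (b 2) (b 0), f (b 0) (b 1)] with hc
  have hcind : LinearIndependent ℤ_[p] c := aux_cols f hA hdet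
  intro i
  induction i with
  | zero => exact ⟨b, fun j => trivial, b.linearIndependent⟩
  | succ n ih =>
      obtain ⟨v, hvmem, hvind⟩ := ih
      have hsat : ∀ j : Fin 3, ∃ α : ℤ_[p], α ≠ 0 ∧ α • b j ∈ derivedSer f n :=
        fun j => aux_sat b (derivedSer f n) v hvmem hvind (b j)
      choose α hα0 hαmem using hsat
      set β : Fin 3 → ℤ_[p] := ![α 1 * α 2, α 2 * α 0, α 0 * α 1] with hβ
      have hβ0 : ∀ j, β j ≠ 0 := by
        intro j
        fin_cases j <;> simp [hβ] <;> exact ⟨hα0 _, hα0 _⟩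
      refine ⟨fun j => β j • c j, ?_, aux_indep_smul hcind β hβ0⟩
      intro j
      show β j • c j ∈ bracketSub f (derivedSer f n) (derivedSer f n)
      fin_cases j
      · exact Submodule.subset_span ⟨α 1 • b 1, hαmem 1, α 2 • b 2, hαmem 2, by
          simp [hβ, hc, map_smul, smul_smul, mul_comm]⟩
      · exact Submodule.subset_span ⟨α 2 • b 2, hαmem 2, α 0 • b 0, hαmem 0, by
          simp [hβ, hc, map_smul, smul_smul, mul_comm]⟩
      · exact Submodule.subset_span ⟨α 0 • b 0, hαmem 0, α 1 • b 1, hαmem 1, by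
          simp [hβ, hc, map_smul, smul_smul, mul_comm]⟩

end Aux

theorem stmt5 (p : ℕ) [Fact p.Prime] {L : Type*} [AddCommGroup L] [Module ℤ_[p] L]
    (f : L →ₗ[ℤ_[p]] L →ₗ[ℤ_[p]] L) (hanti : ∀ z : L, f z z = 0)
    (b0 : Module.Basis (Fin 3) ℤ_[p] L) :
    List.TFAE [
      Module.finrank ℤ_[p] (derivedSer f 1) = 3,
      ∀ i, Module.finrank ℤ_[p] (derivedSer f i) = 3,
      ∀ i, derivedSer f i ≠ ⊥,
      ∃ (b : Module.Basis (Fin 3) ℤ_[p] L) (A : Matrix (Fin 3) (Fin 3) ℤ_[p]),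
        MatrixOf f b A ∧ A.det ≠ 0,
      ∀ (b : Module.Basis (Fin 3) ℤ_[p] L) (A : Matrix (Fin 3) (Fin 3) ℤ_[p]),
        MatrixOf f b A → A.det ≠ 0] := by
  tfae_have 2 → 1 := fun h => h 1
  tfae_have 2 → 3 := by
    intro h i hbot
    have := h i
    rw [hbot] at this
    simp [finrank_bot] at this
  tfae_have 4 → 2 := by
    rintro ⟨b, A, hA, hdet⟩ i
    obtain ⟨v, hvmem, hvind⟩ := aux_ascent f hanti b A hA hdet i
    exact aux_finrank_of_triple b0 _ v hvmem hvind
  tfae_have 3 → 5 := by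
    intro h3 b A hA hdet
    exact h3 3 (aux_solv f hanti b A hA hdet)
  tfae_have 5 → 4 := by
    intro h5
    obtain ⟨A0, hA0⟩ := aux_matrix_exists f b0
    exact ⟨b0, A0, hA0, h5 b0 A0 hA0⟩
  tfae_have 1 → 4 := by
    intro h1
    obtain ⟨A0, hA0⟩ := aux_matrix_exists f b0
    by_cases hdet : A0.det = 0
    · exfalso
      obtain ⟨g, ⟨k, hk⟩, hrel⟩ := aux_dep f hA0 hdet
      obtain ⟨x, y, z, a, bb, cc, hcc, rel, hspan⟩ :=
        aux_perm (![f (b0 1) (b0 2), f (b0 2) (b0 0), f (b0 0) (b0 1)]) g k hk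
          (by simpa using hrel)
      simp only [Matrix.cons_val_zero, Matrix.cons_val_one, Matrix.head_cons,
        Matrix.cons_val_two, Matrix.tail_cons] at hspan
      have hder1 : derivedSer f 1 = Submodule.span ℤ_[p] ({x, y, z} : Set L) := by
        rw [aux_der1 f hanti b0]
        exact hspan.symm
      obtain ⟨v, hvmem, hvind⟩ := aux_triple_of_finrank b0 _ h1
      refine aux_no_triple x y (fun i => cc • v i)
        (aux_indep_smul hvind (fun _ => cc) (fun _ => hcc)) ?_
      intro i
      exact aux_proj x y z a bb cc rel (v i) (by rw [← hder1]; exact hvmem i)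
    · exact ⟨b0, A0, hA0, hdet⟩
  tfae_finish
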